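/- If L is a list-assignment for a finite graph G with deg_G(v) + 2 ≤ 3|L(v)| for every vertex v, and φ is an L-colouring of G minimising the number of monochromatic edges, then φ has defect 2, and moreover for every vertex v with exactly 2 same-coloured neighbours there exists a colour β ∈ L(v) \ {φ(v)} such that at most two neighbours of v are coloured β by φ. -/

import Mathlib

/-- The monochromatic subgraph of `G` under colouring `φ`. -/
def SimpleGraph.monoSub {V : Type*} (G : SimpleGraph V) (φ : V → ℕ) : SimpleGraph V where
  Adj u v := G.Adj u v ∧ φ u = φ v
  symm := ⟨fun u v h => ⟨G.adj_symm h.1, h.2.symm⟩⟩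
  loopless := ⟨fun v h => G.ne_of_adj h.1 rfl⟩

/-- The colouring `φ` has defect at most `d`: every vertex has at most `d`
neighbours of its own colour. -/
def SimpleGraph.DefectLe {V : Type*} (G : SimpleGraph V) (φ : V → ℕ) (d : ℕ) : Prop :=
  ∀ v : V, {w : V | G.Adj v w ∧ φ w = φ v}.ncard ≤ d

/-- The colouring `φ` has clustering at most `c`: every connected component of
the monochromatic subgraph has at most `c` vertices. -/
def SimpleGraph.ClusterLe {V : Type*} (G : SimpleGraph V) (φ : V → ℕ) (c : ℕ) : Prop :=
  ∀ v : V, {w : V | (G.monoSub φ).Reachable v w}.ncard ≤ c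

/-- Twice the number of edges of `G` inside the vertex set `s`
(the number of ordered adjacent pairs in `s`). -/
noncomputable def SimpleGraph.degPairs {V : Type*} (G : SimpleGraph V) (s : Finset V) : ℕ :=
  {p : V × V | p.1 ∈ s ∧ p.2 ∈ s ∧ G.Adj p.1 p.2}.ncard

/-- Twice the number of monochromatic edges under `φ`. -/
noncomputable def SimpleGraph.monoCount {V : Type*} (G : SimpleGraph V) (φ : V → ℕ) : ℕ :=
  {p : V × V | G.Adj p.1 p.2 ∧ φ p.1 = φ p.2}.ncard


open Set

lemma mono_decomp {V : Type*} [Fintype V] (G : SimpleGraph V) (χ : V → ℕ) (v : V) :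
    G.monoCount χ =
      {p : V × V | p.1 ≠ v ∧ p.2 ≠ v ∧ G.Adj p.1 p.2 ∧ χ p.1 = χ p.2}.ncard
        + 2 * {w : V | G.Adj v w ∧ χ w = χ v}.ncard := by
  classical
  set A := {p : V × V | p.1 ≠ v ∧ p.2 ≠ v ∧ G.Adj p.1 p.2 ∧ χ p.1 = χ p.2}
  set S := {w : V | G.Adj v w ∧ χ w = χ v}
  set B := (fun w => ((v, w) : V × V)) '' S
  set C := (fun w => ((w, v) : V × V)) '' S
  have hset : {p : V × V | G.Adj p.1 p.2 ∧ χ p.1 = χ p.2} = A ∪ (B ∪ C) := by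
    ext ⟨a, b⟩
    simp only [A, B, C, S, Set.mem_setOf_eq, Set.mem_union, Set.mem_image]
    constructor
    · rintro ⟨hadj, hcol⟩
      by_cases ha : a = v
      · subst ha
        exact Or.inr (Or.inl ⟨b, ⟨hadj, hcol.symm⟩, rfl⟩)
      · by_cases hb : b = v
        · subst hb
          exact Or.inr (Or.inr ⟨a, ⟨G.adj_symm hadj, hcol⟩, rfl⟩)
        · exact Or.inl ⟨ha, hb, hadj, hcol⟩
    · rintro (⟨_, _, hadj, hcol⟩ | ⟨w, ⟨hadj, hcol⟩, heq⟩ | ⟨w, ⟨hadj, hcol⟩, heq⟩)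
      · exact ⟨hadj, hcol⟩
      · cases heq; exact ⟨hadj, hcol.symm⟩
      · cases heq; exact ⟨G.adj_symm hadj, hcol⟩
  have hinj1 : Function.Injective (fun w : V => ((v, w) : V × V)) := by
    intro a b h; exact (Prod.ext_iff.mp h).2
  have hinj2 : Function.Injective (fun w : V => ((w, v) : V × V)) := by
    intro a b h; exact (Prod.ext_iff.mp h).1
  have hBC : Disjoint B C := by
    rw [Set.disjoint_left]
    rintro p ⟨w, ⟨hadj, _⟩, rfl⟩ ⟨w', ⟨hadj', _⟩, heq⟩
    have h2 : v = w := (Prod.ext_iff.mp heq).2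
    exact G.loopless.irrefl v (h2 ▸ hadj)
  have hABC : Disjoint A (B ∪ C) := by
    rw [Set.disjoint_left]
    rintro p ⟨h1, h2, _⟩ (⟨w, _, rfl⟩ | ⟨w, _, rfl⟩)
    · exact h1 rfl
    · exact h2 rfl
  rw [SimpleGraph.monoCount, hset,
    Set.ncard_union_eq hABC (Set.toFinite _) (Set.toFinite _),
    Set.ncard_union_eq hBC (Set.toFinite _) (Set.toFinite _),
    Set.ncard_image_of_injective _ hinj1, Set.ncard_image_of_injective _ hinj2]
  ring

lemma exchange {V : Type*} [Fintype V] (G : SimpleGraph V) (L : V → Finset ℕ)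
    (φ : V → ℕ) (hφ : ∀ v, φ v ∈ L v)
    (hmin : ∀ ψ : V → ℕ, (∀ v, ψ v ∈ L v) → G.monoCount φ ≤ G.monoCount ψ)
    (v : V) (β : ℕ) (hβ : β ∈ L v) :
    {w : V | G.Adj v w ∧ φ w = φ v}.ncard ≤ {w : V | G.Adj v w ∧ φ w = β}.ncard := by
  classical
  set ψ : V → ℕ := Function.update φ v β with hψ
  have hψL : ∀ u, ψ u ∈ L u := by
    intro u
    by_cases hu : u = v
    · subst hu; simpa [ψ] using hβ
    · simpa [ψ, Function.update_of_ne hu] using hφ u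
  have h1 := mono_decomp G φ v
  have h2 := mono_decomp G ψ v
  have hA : {p : V × V | p.1 ≠ v ∧ p.2 ≠ v ∧ G.Adj p.1 p.2 ∧ ψ p.1 = ψ p.2}
      = {p : V × V | p.1 ≠ v ∧ p.2 ≠ v ∧ G.Adj p.1 p.2 ∧ φ p.1 = φ p.2} := by
    ext ⟨a, b⟩
    simp only [Set.mem_setOf_eq]
    constructor
    · rintro ⟨ha, hb, hadj, hcol⟩
      refine ⟨ha, hb, hadj, ?_⟩
      rwa [hψ, Function.update_of_ne ha, Function.update_of_ne hb] at hcol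
    · rintro ⟨ha, hb, hadj, hcol⟩
      exact ⟨ha, hb, hadj, by rwa [hψ, Function.update_of_ne ha, Function.update_of_ne hb]⟩
  have hS : {w : V | G.Adj v w ∧ ψ w = ψ v} = {w : V | G.Adj v w ∧ φ w = β} := by
    ext w
    simp only [Set.mem_setOf_eq]
    constructor
    · rintro ⟨hadj, hcol⟩
      refine ⟨hadj, ?_⟩
      rwa [hψ, Function.update_of_ne (G.ne_of_adj hadj).symm, Function.update_self] at hcol
    · rintro ⟨hadj, hcol⟩
      exact ⟨hadj, by rw [hψ, Function.update_of_ne (G.ne_of_adj hadj).symm,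
        Function.update_self]; exact hcol⟩
  have hm := hmin ψ hψL
  rw [h1, h2, hA, hS] at hm
  omega

theorem stmt6 {V : Type*} [Fintype V] (G : SimpleGraph V) (L : V → Finset ℕ)
    (hL : ∀ v : V, {w : V | G.Adj v w}.ncard + 2 ≤ 3 * (L v).card)
    (φ : V → ℕ) (hφ : ∀ v, φ v ∈ L v)
    (hmin : ∀ ψ : V → ℕ, (∀ v, ψ v ∈ L v) → G.monoCount φ ≤ G.monoCount ψ) :
    G.DefectLe φ 2 ∧
      ∀ v : V, {w : V | G.Adj v w ∧ φ w = φ v}.ncard = 2 →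
        ∃ β ∈ L v, β ≠ φ v ∧ {w : V | G.Adj v w ∧ φ w = β}.ncard ≤ 2 := by
  classical
  -- notation
  have hncard : ∀ (v : V) (c : ℕ), {w : V | G.Adj v w ∧ φ w = c}.ncard
      = ((Finset.univ.filter (fun w => G.Adj v w)).filter (fun w => φ w = c)).card := by
    intro v c
    rw [← Set.ncard_coe_finset]
    congr 1
    ext w
    simp [Finset.mem_filter]
  have hNcard : ∀ v : V, {w : V | G.Adj v w}.ncard
      = (Finset.univ.filter (fun w => G.Adj v w)).card := by
    intro v
    rw [← Set.ncard_coe_finset]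
    congr 1
    ext w
    simp
  -- key exchange inequality in Finset form
  have key : ∀ (v : V) (β : ℕ), β ∈ L v →
      ((Finset.univ.filter (fun w => G.Adj v w)).filter (fun w => φ w = φ v)).card ≤
      ((Finset.univ.filter (fun w => G.Adj v w)).filter (fun w => φ w = β)).card := by
    intro v β hβ
    have := exchange G L φ hφ hmin v β hβ
    rwa [hncard, hncard] at this
  -- sum bound
  have hsum : ∀ v : V,
      (∑ β ∈ L v, ((Finset.univ.filter (fun w => G.Adj v w)).filter (fun w => φ w = β)).card)
        ≤ (Finset.univ.filter (fun w => G.Adj v w)).card := by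
    intro v
    set N := Finset.univ.filter (fun w => G.Adj v w)
    rw [← Finset.card_biUnion]
    · exact Finset.card_le_card (by
        intro w hw
        simp only [Finset.mem_biUnion, Finset.mem_filter] at hw
        obtain ⟨β, _, hwN, _⟩ := hw
        exact hwN)
    · intro β hβ γ hγ hne
      simp only [Finset.disjoint_left, Finset.mem_filter]
      rintro w ⟨_, h1⟩ ⟨_, h2⟩
      exact hne (h1 ▸ h2 ▸ rfl)
  -- defect bound
  have defect : ∀ v : V,
      ((Finset.univ.filter (fun w => G.Adj v w)).filter (fun w => φ w = φ v)).card ≤ 2 := by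
    intro v
    by_contra hcon
    push_neg at hcon
    have N : Finset V := Finset.univ.filter (fun w => G.Adj v w)
    have hlow : 3 * (L v).card ≤ ∑ β ∈ L v, ((Finset.univ.filter (fun w => G.Adj v w)).filter (fun w => φ w = β)).card := by
      calc 3 * (L v).card = ∑ _β ∈ L v, 3 := by rw [Finset.sum_const, smul_eq_mul]; ring
        _ ≤ _ := Finset.sum_le_sum (fun β hβ => le_trans hcon (key v β hβ))
    have hLv := hL v
    rw [hNcard] at hLv
    have := hsum v
    omega
  constructor
  · intro v
    rw [hncard]
    exact defect v
  · intro v hv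
    rw [hncard] at hv
    by_contra hcon
    push_neg at hcon
    have N : Finset V := Finset.univ.filter (fun w => G.Adj v w)
    have hcon' : ∀ β ∈ (L v).erase (φ v), 3 ≤ ((Finset.univ.filter (fun w => G.Adj v w)).filter (fun w => φ w = β)).card := by
      intro β hβ
      have h1 := Finset.ne_of_mem_erase hβ
      have h2 := Finset.mem_of_mem_erase hβ
      have := hcon β h2 h1
      rw [hncard] at this
      omega
    have hlow : 3 * ((L v).card - 1) ≤
        ∑ β ∈ (L v).erase (φ v), ((Finset.univ.filter (fun w => G.Adj v w)).filter (fun w => φ w = β)).card := by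
      calc 3 * ((L v).card - 1) = ∑ _β ∈ (L v).erase (φ v), 3 := by
            rw [Finset.sum_const, smul_eq_mul, Finset.card_erase_of_mem (hφ v)]; ring
        _ ≤ _ := Finset.sum_le_sum hcon'
    have hsplit : (∑ β ∈ (L v).erase (φ v), ((Finset.univ.filter (fun w => G.Adj v w)).filter (fun w => φ w = β)).card)
        + ((Finset.univ.filter (fun w => G.Adj v w)).filter (fun w => φ w = φ v)).card = ∑ β ∈ L v, ((Finset.univ.filter (fun w => G.Adj v w)).filter (fun w => φ w = β)).card :=
      Finset.sum_erase_add (L v) _ (hφ v)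
    have hLv := hL v
    rw [hNcard] at hLv
    have hs := hsum v
    have hcard1 : 1 ≤ (L v).card := Finset.card_pos.mpr ⟨φ v, hφ v⟩
    omega
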